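/- Let X₁,…,X_{k-1}, Z be i.i.d. uniform on [-1,1] and s ∈ (0,1]. Then P(|max(X₁,…,X_{k-1},s)| < |Z|) = (2^k − (1+s)^k)/(k·2^{k-1}). -/

import Mathlib

open MeasureTheory

noncomputable def unif : Measure ℝ :=
  (2 : ENNReal)⁻¹ • (volume.restrict (Set.Icc (-1 : ℝ) 1))

lemma unif_univ : unif Set.univ = 1 := by
  have h2 : volume (Set.Icc (-1:ℝ) 1) = 2 := by
    rw [Real.volume_Icc, show ((1:ℝ) - -1) = 2 by norm_num, ENNReal.ofReal_ofNat]
  simp [unif, h2, ENNReal.inv_mul_cancel]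

instance : IsFiniteMeasure unif := ⟨by rw [unif_univ]; exact ENNReal.one_lt_top⟩

lemma unif_Iio (t : ℝ) (h0 : -1 ≤ t) (h1 : t ≤ 1) :
    unif (Set.Iio t) = ENNReal.ofReal ((t + 1) / 2) := by
  have : Set.Iio t ∩ Set.Icc (-1 : ℝ) 1 = Set.Ico (-1) t := by
    ext y
    simp only [Set.mem_inter_iff, Set.mem_Iio, Set.mem_Icc, Set.mem_Ico]
    constructor
    · rintro ⟨h, h2, h3⟩; exact ⟨h2, h⟩
    · rintro ⟨h2, h⟩; exact ⟨h, h2, le_trans (le_of_lt h) h1⟩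
  rw [unif, Measure.smul_apply, smul_eq_mul, Measure.restrict_apply measurableSet_Iio, this,
    Real.volume_Ico, ENNReal.ofReal_div_of_pos (by norm_num : (0:ℝ) < 2), ENNReal.ofReal_ofNat,
    ENNReal.div_eq_inv_mul]
  ring_nf

theorem stmt_10 (k : ℕ) (hk : 2 ≤ k) (s : ℝ) (hs0 : 0 < s) (hs1 : s ≤ 1) :
    (((Measure.pi fun _ : Fin (k - 1) => unif).prod unif)
        {p : (Fin (k - 1) → ℝ) × ℝ |
          |max (Finset.univ.sup' (Finset.univ_nonempty_iff.2 ⟨⟨0, by omega⟩⟩) p.1) s| < |p.2|}).toReal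
      = ((2 : ℝ) ^ k - (1 + s) ^ k) / (k * 2 ^ (k - 1)) := by
  set n := k - 1 with hn
  have hn1 : 1 ≤ n := by omega
  have hkn : k = n + 1 := by omega
  set μ := Measure.pi fun _ : Fin n => unif with hμ
  -- rewrite the set
  have hset : {p : (Fin n → ℝ) × ℝ |
      |max (Finset.univ.sup' (Finset.univ_nonempty_iff.2 ⟨⟨0, by omega⟩⟩) p.1) s| < |p.2|}
      = {p : (Fin n → ℝ) × ℝ | (∀ i, p.1 i < |p.2|) ∧ s < |p.2|} := by
    ext p
    have habs : |max (Finset.univ.sup' (Finset.univ_nonempty_iff.2 ⟨⟨0, by omega⟩⟩) p.1) s|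
        = max (Finset.univ.sup' (Finset.univ_nonempty_iff.2 ⟨⟨0, by omega⟩⟩) p.1) s :=
      abs_of_pos (lt_of_lt_of_le hs0 (le_max_right _ _))
    simp only [Set.mem_setOf_eq, habs, max_lt_iff, Finset.sup'_lt_iff, Finset.mem_univ,
      true_implies, forall_const]
  rw [hset]
  have hS : MeasurableSet {p : (Fin n → ℝ) × ℝ | (∀ i, p.1 i < |p.2|) ∧ s < |p.2|} := by
    have he : {p : (Fin n → ℝ) × ℝ | (∀ i, p.1 i < |p.2|) ∧ s < |p.2|}
        = (⋂ i, {p : (Fin n → ℝ) × ℝ | p.1 i < |p.2|}) ∩ {p : (Fin n → ℝ) × ℝ | s < |p.2|} := by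
      ext p; simp [Set.mem_iInter]
    rw [he]
    exact (MeasurableSet.iInter fun i => measurableSet_lt
        ((measurable_pi_apply i).comp measurable_fst) measurable_snd.abs).inter
      (measurableSet_lt measurable_const measurable_snd.abs)
  rw [Measure.prod_apply_symm hS]
  -- the slice function
  set A : ℝ := 2 * (1 - ((s + 1) / 2) ^ (n + 1)) / (n + 1) with hA
  have hApos : 0 ≤ A := by
    apply div_nonneg _ (by positivity)
    have : ((s + 1) / 2 : ℝ) ≤ 1 := by linarith
    have h2 : ((s + 1) / 2 : ℝ) ^ (n+1) ≤ 1 := pow_le_one₀ (by linarith) this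
    linarith
  have key : ∫⁻ z, μ ((fun x => (x, z)) ⁻¹' {p : (Fin n → ℝ) × ℝ | (∀ i, p.1 i < |p.2|) ∧ s < |p.2|}) ∂unif
      = ENNReal.ofReal A := by
    -- the interval integral
    have hInt : (∫ z in s..1, ((z + 1) / 2) ^ n) = A := by
      have h1 : (∫ z in s..1, ((z + 1) / 2) ^ n)
          = ∫ u in (s+1)..(1+1), (fun u : ℝ => (u / 2) ^ n) u := by
        rw [← intervalIntegral.integral_comp_add_right (fun u : ℝ => (u / 2) ^ n) 1]
      rw [h1, intervalIntegral.integral_comp_div (c := 2) (fun u : ℝ => u ^ n) two_ne_zero]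
      rw [integral_pow]
      rw [hA]
      rw [show ((1:ℝ)+1)/2 = 1 by norm_num]
      rw [smul_eq_mul]
      rw [one_pow]
      ring
    -- slice function equals an indicator on Icc
    set F : ℝ → ENNReal :=
      Set.indicator {z : ℝ | s < |z|} (fun z => ENNReal.ofReal (((|z| + 1) / 2) ^ n)) with hF
    have habs : MeasurableSet {z : ℝ | s < |z|} :=
      measurableSet_lt measurable_const measurable_abs
    have hslice : ∀ z ∈ Set.Icc (-1:ℝ) 1,
        μ ((fun x => (x, z)) ⁻¹' {p : (Fin n → ℝ) × ℝ | (∀ i, p.1 i < |p.2|) ∧ s < |p.2|}) = F z := by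
      intro z hz
      rcases le_or_gt |z| s with h | h
      · have h1 : ((fun x => (x, z)) ⁻¹' {p : (Fin n → ℝ) × ℝ | (∀ i, p.1 i < |p.2|) ∧ s < |p.2|}) = ∅ := by
          ext x
          simp only [Set.mem_preimage, Set.mem_setOf_eq, Set.mem_empty_iff_false, iff_false]
          rintro ⟨-, h2⟩
          exact absurd h2 (not_lt.2 h)
        rw [h1, measure_empty, hF, Set.indicator_of_notMem (by simpa using h)]
      · have h1 : ((fun x => (x, z)) ⁻¹' {p : (Fin n → ℝ) × ℝ | (∀ i, p.1 i < |p.2|) ∧ s < |p.2|})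
            = Set.univ.pi fun _ : Fin n => Set.Iio |z| := by
          ext x
          simp only [Set.mem_preimage, Set.mem_setOf_eq, Set.mem_pi, Set.mem_univ, true_implies,
            Set.mem_Iio]
          exact ⟨fun ⟨a, _⟩ => a, fun a => ⟨a, h⟩⟩
        have hz1 : |z| ≤ 1 := abs_le.2 ⟨hz.1, hz.2⟩
        rw [h1, hμ, Measure.pi_pi, Finset.prod_const, Finset.card_univ, Fintype.card_fin,
          unif_Iio |z| (le_trans (by norm_num) (abs_nonneg z)) hz1,
          hF, Set.indicator_of_mem (by simpa using h),
          ← ENNReal.ofReal_pow (by positivity)]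
    -- compute the lintegral
    rw [show unif = (2 : ENNReal)⁻¹ • (volume.restrict (Set.Icc (-1 : ℝ) 1)) from rfl,
      lintegral_smul_measure,
      setLIntegral_congr_fun measurableSet_Icc hslice,
      hF, lintegral_indicator habs, Measure.restrict_restrict habs]
    have hsets : {z : ℝ | s < |z|} ∩ Set.Icc (-1:ℝ) 1 = Set.Ico (-1) (-s) ∪ Set.Ioc s 1 := by
      ext z
      simp only [Set.mem_inter_iff, Set.mem_setOf_eq, Set.mem_Icc, Set.mem_union, Set.mem_Ico,
        Set.mem_Ioc, lt_abs]
      constructor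
      · rintro ⟨h1 | h1, h2, h3⟩
        · right; exact ⟨h1, h3⟩
        · left; constructor <;> linarith
      · rintro (⟨h1, h2⟩ | ⟨h1, h2⟩)
        · exact ⟨Or.inr (by linarith), h1, by linarith⟩
        · exact ⟨Or.inl h1, by linarith, h2⟩
    rw [hsets, setLIntegral_congr ((Ico_ae_eq_Ioc (μ := volume)).union (by rfl)),
      lintegral_union measurableSet_Ioc (by
        rw [Set.disjoint_left]
        rintro z ⟨-, h2⟩ ⟨h3, -⟩
        linarith)]
    have piece2 : ∫⁻ z in Set.Ioc s 1, ENNReal.ofReal (((|z| + 1) / 2) ^ n)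
        = ENNReal.ofReal A := by
      rw [setLIntegral_congr_fun measurableSet_Ioc
        (fun z hz => by rw [abs_of_pos (lt_trans hs0 hz.1)])]
      rw [← ofReal_integral_eq_lintegral_ofReal
        ((Continuous.integrableOn_Ioc (by fun_prop)))
        (by
          filter_upwards [ae_restrict_mem measurableSet_Ioc] with z hz
          have : (0:ℝ) < z + 1 := by nlinarith [hz.1]
          positivity)]
      rw [← intervalIntegral.integral_of_le hs1, hInt]
    have piece1 : ∫⁻ z in Set.Ioc (-1:ℝ) (-s), ENNReal.ofReal (((|z| + 1) / 2) ^ n)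
        = ENNReal.ofReal A := by
      rw [setLIntegral_congr_fun measurableSet_Ioc
        (fun z hz => by rw [abs_of_neg (lt_of_le_of_lt hz.2 (by linarith))])]
      rw [← ofReal_integral_eq_lintegral_ofReal
        ((Continuous.integrableOn_Ioc (by fun_prop)))
        (by
          filter_upwards [ae_restrict_mem measurableSet_Ioc] with z hz
          have : (0:ℝ) < -z + 1 := by linarith [hz.2]
          positivity)]
      rw [← intervalIntegral.integral_of_le (by linarith : (-1:ℝ) ≤ -s)]
      have := intervalIntegral.integral_comp_neg (a := -1) (b := -s) (fun u : ℝ => ((u + 1) / 2) ^ n)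
      simp only [neg_neg] at this
      rw [this, hInt]
    rw [piece1, piece2, ← two_mul, smul_eq_mul, ← mul_assoc,
      ENNReal.inv_mul_cancel two_ne_zero ENNReal.ofNat_ne_top, one_mul]

  rw [key, ENNReal.toReal_ofReal hApos, hA, hkn]
  have hk0 : (0:ℝ) < (n:ℝ) + 1 := by positivity
  simp only [Nat.add_sub_cancel, div_pow]
  field_simp
  push_cast
  ring_nf
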